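/- Let n ≥ 4 be an integer and α₁, …, α_n real numbers with α_k > 0 for at least one k. Let Q : ℝ^{2n} → ℝ be Q(x) = Σ_{k=1}^{n} (α_k/2)(x_{2k−1}² + x_{2k}²) and set γ = (1/(n−3)) log ∘ Q on the nonempty open set U = {x : Q(x) > 0}. Then there exists x ∈ U such that Δγ(x) + (n−1)‖∇γ(x)‖² ≠ 0. (This is the impossibility part of the paper's Example 5.2: for complex dimension n ≥ 4 the candidate conformal factor never satisfies the equation Δγ + ((m−2)/2)|∇γ|² = 0 with m = 2n; the equation forces n = 2.) -/

import Mathlib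

/-- The Laplacian of `ψ` with respect to an orthonormal basis `b` of `E`:
`Δψ(x) = Σ_i D²ψ(x)(bᵢ, bᵢ)`. -/
noncomputable def lap {E : Type*} [NormedAddCommGroup E] [InnerProductSpace ℝ E]
    {F : Type*} [NormedAddCommGroup F] [NormedSpace ℝ F]
    {ι : Type*} [Fintype ι] (b : OrthonormalBasis ι ℝ E) (ψ : E → F) (x : E) : F :=
  ∑ i, fderiv ℝ (fderiv ℝ ψ) x (b i) (b i)

namespace Ex52Aux
open Finset

variable {N : ℕ}

noncomputable def Qa (a : Fin N → ℝ) (x : EuclideanSpace ℝ (Fin N)) : ℝ :=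
  ∑ i, a i / 2 * (x i * x i)

noncomputable def La (a : Fin N → ℝ) :
    EuclideanSpace ℝ (Fin N) →L[ℝ] (EuclideanSpace ℝ (Fin N) →L[ℝ] ℝ) :=
  ∑ i, ((a i) • EuclideanSpace.proj i).smulRight (EuclideanSpace.proj (𝕜 := ℝ) i)

lemma La_apply (a : Fin N → ℝ) (x v : EuclideanSpace ℝ (Fin N)) :
    La a x v = ∑ i, a i * x i * v i := by
  simp [La, ContinuousLinearMap.sum_apply, mul_assoc]

lemma La_single (a : Fin N → ℝ) (x : EuclideanSpace ℝ (Fin N)) (i : Fin N) :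
    La a x (EuclideanSpace.single i 1) = a i * x i := by
  rw [La_apply]
  simp [EuclideanSpace.single_apply, mul_ite, Finset.sum_ite_eq']

lemma hasFDerivAt_Qa (a : Fin N → ℝ) (x : EuclideanSpace ℝ (Fin N)) :
    HasFDerivAt (Qa a) (La a x) x := by
  have h : ∀ i ∈ univ, HasFDerivAt (fun y : EuclideanSpace ℝ (Fin N) => a i / 2 * (y i * y i))
      (((a i * x i) • EuclideanSpace.proj (𝕜 := ℝ) i :
        EuclideanSpace ℝ (Fin N) →L[ℝ] ℝ)) x := by
    intro i _
    have h0 : HasFDerivAt (fun y : EuclideanSpace ℝ (Fin N) => y i)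
        (EuclideanSpace.proj (𝕜 := ℝ) i) x := (EuclideanSpace.proj (𝕜 := ℝ) i).hasFDerivAt
    have h1 := (h0.mul h0).const_mul (a i / 2)
    refine h1.congr_fderiv ?_
    module
  have := HasFDerivAt.fun_sum h
  refine this.congr_fderiv ?_
  ext v
  rw [La_apply]
  simp [ContinuousLinearMap.sum_apply, mul_assoc]

lemma continuous_Qa (a : Fin N → ℝ) : Continuous (Qa a) := by
  unfold Qa
  fun_prop

lemma ev_pos (a : Fin N → ℝ) (x : EuclideanSpace ℝ (Fin N)) (hx : 0 < Qa a x) :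
    ∀ᶠ y in nhds x, 0 < Qa a y :=
  (continuous_Qa a).continuousAt.eventually_mem (isOpen_Ioi.mem_nhds hx)

lemma hasFDerivAt_model (a : Fin N → ℝ) (c : ℝ) (x : EuclideanSpace ℝ (Fin N))
    (hx : 0 < Qa a x) :
    HasFDerivAt (fun y => c * Real.log (Qa a y)) ((c * (Qa a x)⁻¹) • La a x) x := by
  have h := ((hasFDerivAt_Qa a x).log hx.ne').const_mul c
  refine h.congr_fderiv ?_
  module

lemma fderiv_gamma (a : Fin N → ℝ) (c : ℝ) (γ : EuclideanSpace ℝ (Fin N) → ℝ)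
    (hγ : ∀ x, 0 < Qa a x → γ x = c * Real.log (Qa a x))
    (x : EuclideanSpace ℝ (Fin N)) (hx : 0 < Qa a x) :
    fderiv ℝ γ x = (c * (Qa a x)⁻¹) • La a x := by
  have heq : γ =ᶠ[nhds x] fun y => c * Real.log (Qa a y) :=
    (ev_pos a x hx).mono fun y hy => hγ y hy
  rw [heq.fderiv_eq, (hasFDerivAt_model a c x hx).fderiv]

lemma grad_sq (a : Fin N → ℝ) (c : ℝ) (γ : EuclideanSpace ℝ (Fin N) → ℝ)
    (hγ : ∀ x, 0 < Qa a x → γ x = c * Real.log (Qa a x))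
    (x : EuclideanSpace ℝ (Fin N)) (hx : 0 < Qa a x) :
    ‖gradient γ x‖ ^ 2 = c ^ 2 * ((Qa a x) ^ 2)⁻¹ * ∑ i, (a i * x i) ^ 2 := by
  have hg : gradient γ x = (InnerProductSpace.toDual ℝ _).symm (fderiv ℝ γ x) := rfl
  have hcoord : ∀ i, gradient γ x i = c * (Qa a x)⁻¹ * (a i * x i) := by
    intro i
    have h1 : gradient γ x i =
        inner ℝ (gradient γ x) (EuclideanSpace.single i (1:ℝ)) := by
      rw [EuclideanSpace.inner_single_right]; simp
    rw [h1, hg, InnerProductSpace.toDual_symm_apply,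
      fderiv_gamma a c γ hγ x hx]
    rw [ContinuousLinearMap.smul_apply, La_single]
    simp [mul_assoc]
  rw [EuclideanSpace.norm_eq, Real.sq_sqrt (by positivity)]
  rw [Finset.mul_sum]
  refine Finset.sum_congr rfl fun i _ => ?_
  rw [hcoord i]
  rw [Real.norm_eq_abs, sq_abs]
  ring

lemma lap_eq (a : Fin N → ℝ) (c : ℝ) (γ : EuclideanSpace ℝ (Fin N) → ℝ)
    (hγ : ∀ x, 0 < Qa a x → γ x = c * Real.log (Qa a x))
    (x : EuclideanSpace ℝ (Fin N)) (hx : 0 < Qa a x) :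
    ∑ i, fderiv ℝ (fderiv ℝ γ) x (EuclideanSpace.single i 1) (EuclideanSpace.single i 1)
      = c * (Qa a x)⁻¹ * (∑ i, a i) - c * ((Qa a x) ^ 2)⁻¹ * ∑ i, (a i * x i) ^ 2 := by
  set G : EuclideanSpace ℝ (Fin N) → (EuclideanSpace ℝ (Fin N) →L[ℝ] ℝ) :=
    fun y => (c * (Qa a y)⁻¹) • La a y with hGdef
  have heq2 : fderiv ℝ γ =ᶠ[nhds x] G :=
    (ev_pos a x hx).mono fun y hy => fderiv_gamma a c γ hγ y hy
  have hs : HasFDerivAt (fun y => c * (Qa a y)⁻¹)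
      (c • ((-(Qa a x ^ 2)⁻¹) • La a x)) x := by
    have hinv : HasDerivAt (fun t : ℝ => t⁻¹) (-(Qa a x ^ 2)⁻¹) (Qa a x) :=
      hasDerivAt_inv hx.ne'
    exact (hinv.comp_hasFDerivAt x (hasFDerivAt_Qa a x)).const_mul c
  have hm : HasFDerivAt (fun y => La a y) (La a) x := (La a).hasFDerivAt
  have hG : HasFDerivAt G
      ((c * (Qa a x)⁻¹) • La a + (c • ((-(Qa a x ^ 2)⁻¹) • La a x)).smulRight (La a x)) x :=
    hs.smul hm
  have hfd : fderiv ℝ (fderiv ℝ γ) x = fderiv ℝ G x := heq2.fderiv_eq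
  rw [hfd, hG.fderiv]
  have hLaee : ∀ i : Fin N, La a (EuclideanSpace.single i 1) (EuclideanSpace.single i 1)
      = a i := by
    intro i
    rw [La_apply]
    simp [EuclideanSpace.single_apply, mul_ite, Finset.sum_ite_eq']
  have hterm : ∀ i : Fin N,
      ((c * (Qa a x)⁻¹) • La a
        + (c • ((-(Qa a x ^ 2)⁻¹) • La a x)).smulRight (La a x))
        (EuclideanSpace.single i 1) (EuclideanSpace.single i 1)
      = c * (Qa a x)⁻¹ * a i - c * ((Qa a x) ^ 2)⁻¹ * (a i * x i) ^ 2 := by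
    intro i
    rw [ContinuousLinearMap.add_apply, ContinuousLinearMap.add_apply,
      ContinuousLinearMap.smul_apply, ContinuousLinearMap.smul_apply,
      ContinuousLinearMap.smulRight_apply, ContinuousLinearMap.smul_apply,
      ContinuousLinearMap.smul_apply, hLaee i, La_single]
    simp only [smul_eq_mul, ContinuousLinearMap.coe_smul', Pi.smul_apply, smul_eq_mul]
    rw [La_single]
    ring
  rw [Finset.sum_congr rfl fun i _ => hterm i, Finset.sum_sub_distrib,
    ← Finset.mul_sum, ← Finset.mul_sum]

lemma Qa_single (a : Fin N → ℝ) (u : Fin N) (t : ℝ) :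
    Qa a (EuclideanSpace.single u t) = a u / 2 * (t * t) := by
  unfold Qa
  simp [EuclideanSpace.single_apply, mul_ite, ite_mul, Finset.sum_ite_eq']

lemma P_single (a : Fin N → ℝ) (u : Fin N) (t : ℝ) :
    ∑ i, (a i * (EuclideanSpace.single u t : EuclideanSpace ℝ (Fin N)) i) ^ 2
      = (a u * t) ^ 2 := by
  simp [EuclideanSpace.single_apply, mul_ite, ite_pow, Finset.sum_ite_eq']

lemma two_apply (u w : Fin N) (t s : ℝ) (i : Fin N) :
    (EuclideanSpace.single u t + EuclideanSpace.single w s : EuclideanSpace ℝ (Fin N)) i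
      = (if i = u then t else 0) + (if i = w then s else 0) := by
  simp [EuclideanSpace.single_apply]

lemma sum_two (F : Fin N → ℝ) (u w : Fin N) (h : u ≠ w)
    (hF : ∀ i, i ≠ u → i ≠ w → F i = 0) :
    ∑ i, F i = F u + F w := by
  rw [← Finset.sum_subset (Finset.subset_univ {u, w})
    (fun i _ hi => by
      simp only [Finset.mem_insert, Finset.mem_singleton, not_or] at hi
      exact hF i hi.1 hi.2)]
  exact Finset.sum_pair h

lemma Qa_two (a : Fin N → ℝ) (u w : Fin N) (h : u ≠ w) (t s : ℝ) :
    Qa a (EuclideanSpace.single u t + EuclideanSpace.single w s)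
      = a u / 2 * (t * t) + a w / 2 * (s * s) := by
  unfold Qa
  rw [sum_two _ u w h (fun i hiu hiw => by
    rw [two_apply, if_neg hiu, if_neg hiw]; ring)]
  rw [two_apply, two_apply, if_pos rfl, if_pos rfl, if_neg h, if_neg (Ne.symm h)]
  ring

lemma P_two (a : Fin N → ℝ) (u w : Fin N) (h : u ≠ w) (t s : ℝ) :
    ∑ i, (a i * (EuclideanSpace.single u t + EuclideanSpace.single w s :
        EuclideanSpace ℝ (Fin N)) i) ^ 2
      = (a u * t) ^ 2 + (a w * s) ^ 2 := by
  rw [sum_two _ u w h (fun i hiu hiw => by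
    rw [two_apply, if_neg hiu, if_neg hiw]; ring)]
  rw [two_apply, two_apply, if_pos rfl, if_pos rfl, if_neg h, if_neg (Ne.symm h)]
  ring

lemma range_pair (m : ℕ) (g : ℕ → ℝ) :
    ∑ i ∈ range (2 * m), g i = ∑ k ∈ range m, (g (2 * k) + g (2 * k + 1)) := by
  induction m with
  | zero => simp
  | succ m ih =>
    rw [show 2 * (m + 1) = (2 * m + 1) + 1 by ring, Finset.sum_range_succ,
      Finset.sum_range_succ, Finset.sum_range_succ, ih, add_assoc]

lemma pair_sum (m : ℕ) (f : Fin (2 * m) → ℝ) :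
    ∑ i, f i = ∑ k : Fin m,
      (f ⟨2 * (k : ℕ), by have := k.isLt; linarith⟩
       + f ⟨2 * (k : ℕ) + 1, by have := Nat.succ_le_of_lt k.isLt; linarith⟩) := by
  set F : ℕ → ℝ := fun i => if h : i < 2 * m then f ⟨i, h⟩ else 0 with hF
  have h1 : ∑ i, f i = ∑ i : Fin (2 * m), F (i : ℕ) := by
    refine Finset.sum_congr rfl fun i _ => ?_
    simp [hF, i.isLt]
  have h2 : ∑ k : Fin m,
      (f ⟨2 * (k : ℕ), by have := k.isLt; omega⟩
       + f ⟨2 * (k : ℕ) + 1, by have := k.isLt; omega⟩)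
      = ∑ k : Fin m, (fun j => F (2 * j) + F (2 * j + 1)) (k : ℕ) := by
    refine Finset.sum_congr rfl fun k _ => ?_
    have h3 : 2 * (k : ℕ) < 2 * m := by have := k.isLt; omega
    have h4 : 2 * (k : ℕ) + 1 < 2 * m := by have := k.isLt; omega
    simp [hF, h3, h4]
  rw [h1, h2, Fin.sum_univ_eq_sum_range F (2 * m),
    Fin.sum_univ_eq_sum_range (fun j => F (2 * j) + F (2 * j + 1)) m, range_pair]

end Ex52Aux

/-- Example 5.2 of the paper, impossibility for complex dimension n ≥ 4: with
`Q(x) = Σ_k (α_k/2)(x_{2k-1}² + x_{2k}²)` and `γ = (1/(n-3)) log ∘ Q` on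
`U = {Q > 0}`, there is a point of `U` where `Δγ + (n-1)‖∇γ‖² ≠ 0`. -/
theorem example_Cn_impossible
    (n : ℕ) (hn : 4 ≤ n) (α : Fin n → ℝ) (hα : ∃ k, 0 < α k)
    (Q : EuclideanSpace ℝ (Fin (2 * n)) → ℝ)
    (hQ : ∀ x : EuclideanSpace ℝ (Fin (2 * n)),
      Q x = ∑ k : Fin n, α k / 2 *
        (x ⟨2 * (k : ℕ), by have := k.isLt; omega⟩ ^ 2 +
         x ⟨2 * (k : ℕ) + 1, by have := k.isLt; omega⟩ ^ 2))
    (γ : EuclideanSpace ℝ (Fin (2 * n)) → ℝ)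
    (hγ : ∀ x : EuclideanSpace ℝ (Fin (2 * n)), 0 < Q x →
      γ x = (1 / ((n : ℝ) - 3)) * Real.log (Q x)) :
    ∃ x : EuclideanSpace ℝ (Fin (2 * n)), 0 < Q x ∧
      lap (EuclideanSpace.basisFun (Fin (2 * n)) ℝ) γ x
        + ((n : ℝ) - 1) * ‖gradient γ x‖ ^ 2 ≠ 0 := by
  classical
  obtain ⟨k, hk⟩ := hα
  have hn4 : (4 : ℝ) ≤ (n : ℝ) := by exact_mod_cast hn
  have h3 : (0 : ℝ) < (n : ℝ) - 3 := by linarith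
  set c : ℝ := 1 / ((n : ℝ) - 3) with hcdef
  have hcpos : 0 < c := by rw [hcdef]; positivity
  have hc : ((n : ℝ) - 3) * c = 1 := by rw [hcdef]; field_simp
  set a : Fin (2 * n) → ℝ := fun i => α ⟨(i : ℕ) / 2, by have := i.isLt; omega⟩ with hadef
  have ha2 : ∀ (K : Fin n) (h : 2 * (K : ℕ) < 2 * n), a ⟨2 * (K : ℕ), h⟩ = α K := by
    intro K h
    show α _ = α K
    congr 1
    apply Fin.ext
    show (2 * (K : ℕ)) / 2 = (K : ℕ)
    omega
  have ha2' : ∀ (K : Fin n) (h : 2 * (K : ℕ) + 1 < 2 * n), a ⟨2 * (K : ℕ) + 1, h⟩ = α K := by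
    intro K h
    show α _ = α K
    congr 1
    apply Fin.ext
    show (2 * (K : ℕ) + 1) / 2 = (K : ℕ)
    omega
  have hQa : ∀ x, Q x = Ex52Aux.Qa a x := by
    intro x
    rw [hQ x]
    unfold Ex52Aux.Qa
    rw [Ex52Aux.pair_sum n (fun i => a i / 2 * (x i * x i))]
    refine Finset.sum_congr rfl fun K _ => ?_
    rw [ha2 K, ha2' K]
    ring
  have hγ' : ∀ x, 0 < Ex52Aux.Qa a x → γ x = c * Real.log (Ex52Aux.Qa a x) := by
    intro x hx
    rw [← hQa x] at hx ⊢
    exact hγ x hx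
  set S : ℝ := ∑ K, α K with hSdef
  have hSA : ∑ i, a i = 2 * S := by
    rw [Ex52Aux.pair_sum n a, hSdef, Finset.mul_sum]
    refine Finset.sum_congr rfl fun K _ => ?_
    rw [ha2 K, ha2' K]
    ring
  -- the key reduction
  have key : ∀ x, 0 < Ex52Aux.Qa a x →
      S * Ex52Aux.Qa a x + c * (∑ i, (a i * x i) ^ 2) ≠ 0 →
      lap (EuclideanSpace.basisFun (Fin (2 * n)) ℝ) γ x
        + ((n : ℝ) - 1) * ‖gradient γ x‖ ^ 2 ≠ 0 := by
    intro x hx hne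
    set Qx := Ex52Aux.Qa a x with hQxdef
    set P : ℝ := ∑ i, (a i * x i) ^ 2 with hPdef
    have hl : lap (EuclideanSpace.basisFun (Fin (2 * n)) ℝ) γ x
        = c * Qx⁻¹ * (∑ i, a i) - c * (Qx ^ 2)⁻¹ * P := by
      simp only [lap, EuclideanSpace.basisFun_apply]
      exact Ex52Aux.lap_eq a c γ hγ' x hx
    have hgd : ‖gradient γ x‖ ^ 2 = c ^ 2 * (Qx ^ 2)⁻¹ * P :=
      Ex52Aux.grad_sq a c γ hγ' x hx
    rw [hl, hgd, hSA]
    intro h0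
    have hQne : Qx ≠ 0 := hx.ne'
    have hQQ : Qx⁻¹ * Qx ^ 2 = Qx := by field_simp
    have hQQ2 : (Qx ^ 2)⁻¹ * Qx ^ 2 = 1 := by field_simp
    have hid : ((n : ℝ) - 1) * c ^ 2 - c = 2 * c ^ 2 := by linear_combination c * hc
    have hpull : (c * Qx⁻¹ * (2 * S) - c * (Qx ^ 2)⁻¹ * P
        + ((n : ℝ) - 1) * (c ^ 2 * (Qx ^ 2)⁻¹ * P)) * Qx ^ 2
        = 2 * c * (S * Qx + c * P) := by
      calc (c * Qx⁻¹ * (2 * S) - c * (Qx ^ 2)⁻¹ * P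
          + ((n : ℝ) - 1) * (c ^ 2 * (Qx ^ 2)⁻¹ * P)) * Qx ^ 2
          = 2 * c * S * (Qx⁻¹ * Qx ^ 2)
            + (((n : ℝ) - 1) * c ^ 2 - c) * P * ((Qx ^ 2)⁻¹ * Qx ^ 2) := by ring
        _ = 2 * c * S * Qx + (2 * c ^ 2) * P * 1 := by rw [hQQ, hQQ2, hid]
        _ = 2 * c * (S * Qx + c * P) := by ring
    rw [h0, zero_mul] at hpull
    have h2c : (2 * c) ≠ 0 := by positivity
    exact hne ((mul_eq_zero.mp hpull.symm).resolve_left h2c)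
  set i2k : Fin (2 * n) := ⟨2 * (k : ℕ), by have := k.isLt; omega⟩ with hi2k
  have hai2k : a i2k = α k := ha2 k _
  by_cases hA : S + 2 * c * α k = 0
  · -- need a negative coefficient
    have hSneg : S < 0 := by nlinarith
    have hj : ∃ j, α j < 0 := by
      by_contra h
      push_neg at h
      have : 0 ≤ S := Finset.sum_nonneg fun j _ => h j
      linarith
    obtain ⟨j, hj⟩ := hj
    have hjk : j ≠ k := fun h => by rw [h] at hj; linarith
    set i2j : Fin (2 * n) := ⟨2 * (j : ℕ), by have := j.isLt; omega⟩ with hi2j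
    have hai2j : a i2j = α j := ha2 j _
    have hne2 : i2k ≠ i2j := by
      intro h
      apply hjk
      apply Fin.ext
      have h' : 2 * (k : ℕ) = 2 * (j : ℕ) := congrArg Fin.val h
      omega
    have hαj : α j ≠ 0 := ne_of_lt hj
    set s : ℝ := Real.sqrt (α k / (-2 * α j)) with hsdef
    have hfrac : 0 < α k / (-2 * α j) := div_pos hk (by linarith)
    have hs2 : s ^ 2 = α k / (-2 * α j) := Real.sq_sqrt hfrac.le
    set x₂ : EuclideanSpace ℝ (Fin (2 * n)) :=
      EuclideanSpace.single i2k (1 : ℝ) + EuclideanSpace.single i2j s with hx2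
    have hQx2 : Ex52Aux.Qa a x₂ = α k / 4 := by
      rw [hx2, Ex52Aux.Qa_two a i2k i2j hne2, hai2k, hai2j,
        show s * s = s ^ 2 by ring, hs2]
      field_simp
      ring
    have hP2 : ∑ i, (a i * x₂ i) ^ 2 = α k ^ 2 + α j ^ 2 * s ^ 2 := by
      rw [hx2, Ex52Aux.P_two a i2k i2j hne2, hai2k, hai2j]
      ring
    have hpos2 : 0 < Ex52Aux.Qa a x₂ := by rw [hQx2]; positivity
    refine ⟨x₂, ?_, ?_⟩
    · rw [hQa]; exact hpos2
    · refine key x₂ hpos2 ?_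
      rw [hQx2, hP2]
      have hval : S * (α k / 4) + c * (α k ^ 2 + α j ^ 2 * s ^ 2)
          = c * α k ^ 2 / 2 + c * α j ^ 2 * s ^ 2 := by
        linear_combination (α k / 4) * hA
      rw [hval]
      have hs2pos : 0 < s ^ 2 := by rw [hs2]; exact hfrac
      have h1 : 0 < c * α k ^ 2 / 2 := by positivity
      have h2 : 0 < c * α j ^ 2 * s ^ 2 := by
        have : 0 < α j ^ 2 := by positivity
        positivity
      exact ne_of_gt (by linarith)
  · set x₁ : EuclideanSpace ℝ (Fin (2 * n)) := EuclideanSpace.single i2k (1 : ℝ) with hx1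
    have hQx1 : Ex52Aux.Qa a x₁ = α k / 2 := by
      rw [hx1, Ex52Aux.Qa_single, hai2k]; ring
    have hP1 : ∑ i, (a i * x₁ i) ^ 2 = α k ^ 2 := by
      rw [hx1, Ex52Aux.P_single, hai2k]; ring
    have hpos1 : 0 < Ex52Aux.Qa a x₁ := by rw [hQx1]; positivity
    refine ⟨x₁, ?_, ?_⟩
    · rw [hQa]; exact hpos1
    · refine key x₁ hpos1 ?_
      rw [hQx1, hP1]
      intro h0
      apply hA
      have hfac : α k / 2 * (S + 2 * c * α k) = 0 := by linear_combination h0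
      rcases mul_eq_zero.mp hfac with h | h
      · exfalso; nlinarith
      · exact h
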